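/- For the logistic equation y' = 2y − y² the exact scheme y_{n+1} = (y_n + 2φ y_n)/(1 + φ y_n), φ = (1 − e^{−2h})/2, preserves the equilibria and their stability for every h > 0: its fixed points are exactly 0 and 2, the Jacobian at 0 exceeds 1 (instability), and the Jacobian at 2 lies strictly in (−1, 1) (local asymptotic stability). -/

import Mathlib

open Real

theorem logistic_scheme_elementary_stable (h : ℝ) (hh : 0 < h)
    (φ : ℝ) (hφ : φ = (1 - Real.exp (-2 * h)) / 2)
    (F : ℝ → ℝ) (hF : ∀ y : ℝ, F y = (y + 2 * φ * y) / (1 + φ * y)) :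
    (∀ y : ℝ, F y = y ↔ y = 0 ∨ y = 2) ∧
    1 < deriv F 0 ∧
    -1 < deriv F 2 ∧ deriv F 2 < 1 := by
  have he1 : Real.exp (-2 * h) < 1 := by
    rw [Real.exp_lt_one_iff]; nlinarith
  have he0 : 0 < Real.exp (-2 * h) := Real.exp_pos _
  have hφ0 : 0 < φ := by rw [hφ]; linarith
  have hφhalf : φ < 1/2 := by rw [hφ]; linarith
  -- derivative computation
  have hderiv : ∀ y₀ : ℝ, 1 + φ * y₀ ≠ 0 →
      HasDerivAt F (((1 + 2*φ) * (1 + φ*y₀) - (y₀ + 2*φ*y₀) * φ) / (1 + φ*y₀)^2) y₀ := by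
    intro y₀ hy
    have h1 : HasDerivAt (fun y : ℝ => y + 2*φ*y) (1 + 2*φ) y₀ := by
      have := (hasDerivAt_id' y₀).add ((hasDerivAt_id' y₀).const_mul (2*φ)); simp only [mul_one] at this; exact this
    have h2 : HasDerivAt (fun y : ℝ => 1 + φ*y) φ y₀ := by
      simpa using ((hasDerivAt_id y₀).const_mul φ).const_add 1
    have := h1.div h2 hy
    have hFeq : F = fun y => (y + 2*φ*y) / (1 + φ*y) := funext hF
    rw [hFeq]
    exact this
  have hd0 : deriv F 0 = 1 + 2*φ := by
    have := (hderiv 0 (by norm_num)).deriv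
    rw [this]; field_simp; ring
  have hd2 : deriv F 2 = 1 / (1 + 2*φ) := by
    have hne : 1 + φ * 2 ≠ 0 := by positivity
    have := (hderiv 2 hne).deriv
    rw [this]; field_simp; ring
  refine ⟨?_, ?_, ?_, ?_⟩
  · intro y
    rw [hF y]
    constructor
    · intro hy
      by_cases hden : 1 + φ * y = 0
      · rw [hden, div_zero] at hy
        exfalso
        have : φ * y = -1 := by linarith
        rw [← hy] at this
        simp at this
      · rw [div_eq_iff hden] at hy
        have : φ * y * (y - 2) = 0 := by nlinarith
        rcases mul_eq_zero.1 this with h1 | h1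
        · rcases mul_eq_zero.1 h1 with h2 | h2
          · exact absurd h2 (ne_of_gt hφ0)
          · exact Or.inl h2
        · exact Or.inr (by linarith)
    · rintro (rfl | rfl)
      · simp
      · have hne : 1 + φ * 2 ≠ 0 := by positivity
        field_simp
  · rw [hd0]; linarith
  · rw [hd2]
    have : 0 < 1 + 2*φ := by linarith
    have := div_pos one_pos this
    linarith
  · rw [hd2]
    rw [div_lt_one (by linarith)]
    linarith
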